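/- Let α ≥ 0 and let {C_l : l ∈ ℕ} be positive reals for which there are constants a, b > 0 with a (l+1)^α e^{−l} ≤ C_l ≤ b (l+1)^α e^{−l} for all l, and set Γ_l = (2l+1) C_l. Then lim_{l→∞} sup_{l₁ ≥ 0} [ Σ_{l₂ ≥ 0} Γ_{l₁} Γ_{l₂} C(l₁, l₂, l)² ] / [ Σ_{l₁, l₂ ≥ 0} Γ_{l₁} Γ_{l₂} C(l₁, l₂, l)² ] = 0 (i.e., the sufficient condition for the high-frequency central limit theorem in the quadratic case q = 2 holds for exponentially decaying angular power spectra). -/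

import Mathlib

open scoped BigOperators

noncomputable section

/-- Zero-projection Clebsch–Gordan coefficient of `SO(3)`. -/
def CG0 (l₁ l₂ l₃ : ℕ) : ℝ :=
  if Even (l₁ + l₂ + l₃) ∧ l₃ ≤ l₁ + l₂ ∧ l₁ ≤ l₂ + l₃ ∧ l₂ ≤ l₁ + l₃ then
    (-1 : ℝ) ^ ((l₁ + l₂ + l₃) / 2 - l₃) * Real.sqrt (2 * (l₃ : ℝ) + 1) *
      (((l₁ + l₂ + l₃) / 2).factorial : ℝ) /
      ((((l₁ + l₂ + l₃) / 2 - l₃).factorial : ℝ) * (((l₁ + l₂ + l₃) / 2 - l₂).factorial : ℝ) *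
        (((l₁ + l₂ + l₃) / 2 - l₁).factorial : ℝ)) *
      Real.sqrt ((((l₁ + l₂ - l₃).factorial : ℝ) * ((l₁ + l₃ - l₂).factorial : ℝ) *
        ((l₂ + l₃ - l₁).factorial : ℝ)) / ((l₁ + l₂ + l₃ + 1).factorial : ℝ))
  else 0

/-- central binomial as a real: (2m)! / (m!)^2 -/
def cb (m : ℕ) : ℝ := ((2*m).factorial : ℝ) / ((m.factorial : ℝ))^2

lemma factR_pos (n : ℕ) : (0:ℝ) < (n.factorial : ℝ) := by exact_mod_cast n.factorial_pos

lemma cb_pos (m : ℕ) : 0 < cb m := div_pos (factR_pos _) (by positivity)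

lemma cb_succ' (m : ℕ) : ((m:ℝ)+1) * cb (m+1) = 2*(2*(m:ℝ)+1) * cb m := by
  unfold cb
  have h1 : 2*(m+1) = (2*m+1)+1 := by ring
  rw [h1, Nat.factorial_succ, Nat.factorial_succ, Nat.factorial_succ]
  push_cast
  have := (factR_pos m).ne'
  have := (factR_pos (2*m)).ne'
  field_simp
  ring

lemma sqrt_sq_mul {c : ℝ} (hc : 0 ≤ c) (d : ℝ) : Real.sqrt (c^2*d) = c * Real.sqrt d := by
  rw [Real.sqrt_mul (sq_nonneg c), Real.sqrt_sq hc]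

lemma cb_upper (m : ℕ) : cb m * Real.sqrt ((m:ℝ)+1) ≤ 4^m := by
  induction m with
  | zero => simp [cb]
  | succ m ih =>
    have key : (2*(m:ℝ)+1) * Real.sqrt ((m:ℝ)+2) ≤ 2*((m:ℝ)+1) * Real.sqrt ((m:ℝ)+1) := by
      have h := Real.sqrt_le_sqrt (by nlinarith [sq_nonneg (m:ℝ)] :
        (2*(m:ℝ)+1)^2 * ((m:ℝ)+2) ≤ (2*((m:ℝ)+1))^2 * ((m:ℝ)+1))
      rwa [sqrt_sq_mul (by positivity), sqrt_sq_mul (by positivity)] at h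
    have hpos : (0:ℝ) < (m:ℝ)+1 := by positivity
    have hcb := (cb_pos m).le
    have hcast : (((m+1:ℕ)):ℝ) + 1 = (m:ℝ)+2 := by push_cast; ring
    rw [hcast]
    refine le_of_mul_le_mul_left ?_ hpos
    calc ((m:ℝ)+1) * (cb (m+1) * Real.sqrt ((m:ℝ)+2))
        = (2*(2*(m:ℝ)+1) * cb m) * Real.sqrt ((m:ℝ)+2) := by rw [← mul_assoc, cb_succ' m]
      _ = 2 * cb m * ((2*(m:ℝ)+1) * Real.sqrt ((m:ℝ)+2)) := by ring
      _ ≤ 2 * cb m * (2*((m:ℝ)+1) * Real.sqrt ((m:ℝ)+1)) := by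
          apply mul_le_mul_of_nonneg_left key (by positivity)
      _ = 4*((m:ℝ)+1) * (cb m * Real.sqrt ((m:ℝ)+1)) := by ring
      _ ≤ 4*((m:ℝ)+1) * 4^m := by apply mul_le_mul_of_nonneg_left ih (by positivity)
      _ = ((m:ℝ)+1) * 4^(m+1) := by ring

lemma cb_lower (m : ℕ) : (4:ℝ)^m ≤ 2 * Real.sqrt ((m:ℝ)+1) * cb m := by
  have main : ∀ m : ℕ, 1 ≤ m → (4:ℝ)^m ≤ 2 * Real.sqrt (m:ℝ) * cb m := by
    intro m hm
    induction m, hm using Nat.le_induction with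
    | base =>
      have : cb 1 = 2 := by norm_num [cb, Nat.factorial]
      simp [this]
      norm_num
    | succ m hm ih =>
      have key : 2*((m:ℝ)+1) * Real.sqrt (m:ℝ) ≤ (2*(m:ℝ)+1) * Real.sqrt ((m:ℝ)+1) := by
        have h := Real.sqrt_le_sqrt (by nlinarith [sq_nonneg (m:ℝ)] :
          (2*((m:ℝ)+1))^2 * (m:ℝ) ≤ (2*(m:ℝ)+1)^2 * ((m:ℝ)+1))
        rwa [sqrt_sq_mul (by positivity), sqrt_sq_mul (by positivity)] at h
      have hpos : (0:ℝ) < (m:ℝ)+1 := by positivity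
      have hcb := (cb_pos m).le
      have hcast : (((m+1:ℕ)):ℝ) = (m:ℝ)+1 := by push_cast; ring
      rw [hcast]
      refine le_of_mul_le_mul_left ?_ hpos
      calc ((m:ℝ)+1) * 4^(m+1)
          = ((m:ℝ)+1)*4*4^m := by ring
        _ ≤ ((m:ℝ)+1)*4*(2 * Real.sqrt (m:ℝ) * cb m) := by
            apply mul_le_mul_of_nonneg_left ih (by positivity)
        _ = 4 * cb m * (2*((m:ℝ)+1) * Real.sqrt (m:ℝ)) := by ring
        _ ≤ 4 * cb m * ((2*(m:ℝ)+1) * Real.sqrt ((m:ℝ)+1)) := by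
            apply mul_le_mul_of_nonneg_left key (by positivity)
        _ = 2 * Real.sqrt ((m:ℝ)+1) * (2*(2*(m:ℝ)+1) * cb m) := by ring
        _ = 2 * Real.sqrt ((m:ℝ)+1) * (((m:ℝ)+1) * cb (m+1)) := by rw [cb_succ' m]
        _ = ((m:ℝ)+1) * (2 * Real.sqrt ((m:ℝ)+1) * cb (m+1)) := by ring
  rcases Nat.eq_zero_or_pos m with h | h
  · subst h
    simp [cb, Nat.factorial]
  · calc (4:ℝ)^m ≤ 2 * Real.sqrt (m:ℝ) * cb m := main m h
      _ ≤ 2 * Real.sqrt ((m:ℝ)+1) * cb m := by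
          apply mul_le_mul_of_nonneg_right _ (cb_pos m).le
          have := Real.sqrt_le_sqrt (by linarith : (m:ℝ) ≤ (m:ℝ)+1)
          linarith

def Rr (p q : ℕ) : ℝ := cb p * cb q / cb (p+q)

lemma Rr_pos (p q : ℕ) : 0 < Rr p q := div_pos (mul_pos (cb_pos p) (cb_pos q)) (cb_pos (p+q))

lemma Rr_le (p q : ℕ) :
    Rr p q ≤ 2 * Real.sqrt ((p:ℝ)+(q:ℝ)+1) / (Real.sqrt ((p:ℝ)+1) * Real.sqrt ((q:ℝ)+1)) := by
  unfold Rr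
  rw [div_le_div_iff₀ (cb_pos (p+q)) (by positivity)]
  have h1 : cb p * cb q * (Real.sqrt ((p:ℝ)+1) * Real.sqrt ((q:ℝ)+1))
      = (cb p * Real.sqrt ((p:ℝ)+1)) * (cb q * Real.sqrt ((q:ℝ)+1)) := by ring
  rw [h1]
  calc (cb p * Real.sqrt ((p:ℝ)+1)) * (cb q * Real.sqrt ((q:ℝ)+1))
      ≤ 4^p * 4^q := by
        apply mul_le_mul (cb_upper p) (cb_upper q)
          (mul_pos (cb_pos q) (Real.sqrt_pos.2 (by positivity))).le (by positivity)
    _ = 4^(p+q) := by rw [pow_add]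
    _ ≤ 2 * Real.sqrt (((p+q:ℕ):ℝ)+1) * cb (p+q) := cb_lower (p+q)
    _ = 2 * Real.sqrt ((p:ℝ)+(q:ℝ)+1) * cb (p+q) := by push_cast; ring_nf

lemma Rr_ge (p q : ℕ) :
    Real.sqrt ((p:ℝ)+(q:ℝ)+1) / (4 * (Real.sqrt ((p:ℝ)+1) * Real.sqrt ((q:ℝ)+1))) ≤ Rr p q := by
  unfold Rr
  rw [div_le_div_iff₀ (by positivity) (cb_pos (p+q))]
  calc Real.sqrt ((p:ℝ)+(q:ℝ)+1) * cb (p+q)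
      = cb (p+q) * Real.sqrt (((p+q:ℕ):ℝ)+1) := by push_cast; ring_nf
    _ ≤ 4^(p+q) := cb_upper (p+q)
    _ = 4^p * 4^q := by rw [pow_add]
    _ ≤ (2 * Real.sqrt ((p:ℝ)+1) * cb p) * (2 * Real.sqrt ((q:ℝ)+1) * cb q) := by
        apply mul_le_mul (cb_lower p) (cb_lower q) (by positivity)
        exact (mul_pos (mul_pos two_pos (Real.sqrt_pos.2 (by positivity))) (cb_pos p)).le
    _ = cb p * cb q * (4 * (Real.sqrt ((p:ℝ)+1) * Real.sqrt ((q:ℝ)+1))) := by ring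

def Lr (x y z : ℕ) : ℝ :=
  ((x+y+z).factorial:ℝ)^2 * ((2*x).factorial:ℝ) * ((2*y).factorial:ℝ) * ((2*z).factorial:ℝ) /
    (((x.factorial:ℝ))^2 * ((y.factorial:ℝ))^2 * ((z.factorial:ℝ))^2 * ((2*(x+y+z)).factorial:ℝ))

lemma Lr_eq (x y z : ℕ) : Lr x y z = Rr z (x+y) * Rr x y := by
  unfold Lr Rr cb
  have h1 : z+(x+y) = x+y+z := by ring
  rw [h1]
  have h2 : 2*(x+y) = 2*x+2*y := by ring
  have := (factR_pos x).ne'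
  have := (factR_pos y).ne'
  have := (factR_pos z).ne'
  have := (factR_pos (x+y)).ne'
  have := (factR_pos (x+y+z)).ne'
  have := (factR_pos (2*x)).ne'
  have := (factR_pos (2*y)).ne'
  have := (factR_pos (2*z)).ne'
  have := (factR_pos (2*(x+y))).ne'
  have := (factR_pos (2*(x+y+z))).ne'
  field_simp

lemma Lr_pos (x y z : ℕ) : 0 < Lr x y z := by
  rw [Lr_eq]; exact mul_pos (Rr_pos _ _) (Rr_pos _ _)

lemma Lr_le (x y z : ℕ) :
    Lr x y z ≤ 4 * Real.sqrt ((x:ℝ)+(y:ℝ)+(z:ℝ)+1) /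
      (Real.sqrt ((x:ℝ)+1) * Real.sqrt ((y:ℝ)+1) * Real.sqrt ((z:ℝ)+1)) := by
  rw [Lr_eq]
  have h1 := Rr_le z (x+y)
  have h2 := Rr_le x y
  push_cast at h1
  have sx := Real.sqrt_pos.2 (show (0:ℝ) < (x:ℝ)+1 by positivity)
  have sy := Real.sqrt_pos.2 (show (0:ℝ) < (y:ℝ)+1 by positivity)
  have sz := Real.sqrt_pos.2 (show (0:ℝ) < (z:ℝ)+1 by positivity)
  have sxy := Real.sqrt_pos.2 (show (0:ℝ) < (x:ℝ)+(y:ℝ)+1 by positivity)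
  have sJ := Real.sqrt_nonneg ((z:ℝ)+((x:ℝ)+(y:ℝ))+1)
  calc Rr z (x+y) * Rr x y
      ≤ (2 * Real.sqrt ((z:ℝ)+((x:ℝ)+(y:ℝ))+1) / (Real.sqrt ((z:ℝ)+1) * Real.sqrt ((x:ℝ)+(y:ℝ)+1))) *
        (2 * Real.sqrt ((x:ℝ)+(y:ℝ)+1) / (Real.sqrt ((x:ℝ)+1) * Real.sqrt ((y:ℝ)+1))) := by
        apply mul_le_mul h1 h2 (Rr_pos x y).le
        positivity
    _ = 4 * Real.sqrt ((z:ℝ)+((x:ℝ)+(y:ℝ))+1) /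
        (Real.sqrt ((x:ℝ)+1) * Real.sqrt ((y:ℝ)+1) * Real.sqrt ((z:ℝ)+1)) := by
        field_simp
        ring
    _ = 4 * Real.sqrt ((x:ℝ)+(y:ℝ)+(z:ℝ)+1) /
        (Real.sqrt ((x:ℝ)+1) * Real.sqrt ((y:ℝ)+1) * Real.sqrt ((z:ℝ)+1)) := by
        norm_num [add_comm, add_left_comm, add_assoc]

lemma Lr_ge (x y z : ℕ) :
    Real.sqrt ((x:ℝ)+(y:ℝ)+(z:ℝ)+1) /
      (16 * (Real.sqrt ((x:ℝ)+1) * Real.sqrt ((y:ℝ)+1) * Real.sqrt ((z:ℝ)+1))) ≤ Lr x y z := by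
  rw [Lr_eq]
  have h1 := Rr_ge z (x+y)
  have h2 := Rr_ge x y
  push_cast at h1
  have sx := Real.sqrt_pos.2 (show (0:ℝ) < (x:ℝ)+1 by positivity)
  have sy := Real.sqrt_pos.2 (show (0:ℝ) < (y:ℝ)+1 by positivity)
  have sz := Real.sqrt_pos.2 (show (0:ℝ) < (z:ℝ)+1 by positivity)
  have sxy := Real.sqrt_pos.2 (show (0:ℝ) < (x:ℝ)+(y:ℝ)+1 by positivity)
  have sJ := Real.sqrt_nonneg ((z:ℝ)+((x:ℝ)+(y:ℝ))+1)
  calc Real.sqrt ((x:ℝ)+(y:ℝ)+(z:ℝ)+1) /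
      (16 * (Real.sqrt ((x:ℝ)+1) * Real.sqrt ((y:ℝ)+1) * Real.sqrt ((z:ℝ)+1)))
      = (Real.sqrt ((z:ℝ)+((x:ℝ)+(y:ℝ))+1) / (4 * (Real.sqrt ((z:ℝ)+1) * Real.sqrt ((x:ℝ)+(y:ℝ)+1)))) *
        (Real.sqrt ((x:ℝ)+(y:ℝ)+1) / (4 * (Real.sqrt ((x:ℝ)+1) * Real.sqrt ((y:ℝ)+1)))) := by
        rw [show (z:ℝ)+((x:ℝ)+(y:ℝ))+1 = (x:ℝ)+(y:ℝ)+(z:ℝ)+1 by ring]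
        field_simp
        ring
    _ ≤ Rr z (x+y) * Rr x y := by
        apply mul_le_mul h1 h2 (by positivity) (Rr_pos _ _).le

lemma CG0_eq_zero {l₁ l₂ l₃ : ℕ}
    (h : ¬(Even (l₁ + l₂ + l₃) ∧ l₃ ≤ l₁ + l₂ ∧ l₁ ≤ l₂ + l₃ ∧ l₂ ≤ l₁ + l₃)) :
    CG0 l₁ l₂ l₃ = 0 := by unfold CG0; rw [if_neg h]

lemma CG0_sq_eq {l₁ l₂ l₃ : ℕ}
    (h : Even (l₁ + l₂ + l₃) ∧ l₃ ≤ l₁ + l₂ ∧ l₁ ≤ l₂ + l₃ ∧ l₂ ≤ l₁ + l₃) :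
    CG0 l₁ l₂ l₃ ^ 2 = (2*(l₃:ℝ)+1) / (2*(((l₁+l₂+l₃)/2 : ℕ):ℝ)+1) *
      Lr ((l₁+l₂+l₃)/2 - l₁) ((l₁+l₂+l₃)/2 - l₂) ((l₁+l₂+l₃)/2 - l₃) := by
  obtain ⟨k, hk⟩ := h.1
  obtain ⟨hev, h1, h2, h3⟩ := h
  set J := (l₁+l₂+l₃)/2 with hJdef
  set x := J - l₁ with hx
  set y := J - l₂ with hy
  set z := J - l₃ with hz
  have hJ : l₁+l₂+l₃ = 2*J := by omega
  have e1 : l₁+l₂-l₃ = 2*z := by omega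
  have e2 : l₁+l₃-l₂ = 2*y := by omega
  have e3 : l₂+l₃-l₁ = 2*x := by omega
  have e4 : x+y+z = J := by omega
  have e5 : l₁+l₂+l₃+1 = 2*J+1 := by omega
  unfold CG0
  rw [if_pos ⟨⟨k, hk⟩, h1, h2, h3⟩]
  have key : ∀ A B CJ D E : ℝ, (A * B * CJ / D * E)^2 = A^2 * B^2 * (CJ^2 / D^2) * E^2 := by
    intros; ring
  rw [key]
  have ha : ((-1:ℝ)^z)^2 = 1 := by rw [← pow_mul, mul_comm, pow_mul]; norm_num
  have hb : Real.sqrt (2*(l₃:ℝ)+1)^2 = 2*(l₃:ℝ)+1 := Real.sq_sqrt (by positivity)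
  have he : Real.sqrt ((((l₁ + l₂ - l₃).factorial : ℝ) * ((l₁ + l₃ - l₂).factorial : ℝ) *
        ((l₂ + l₃ - l₁).factorial : ℝ)) / ((l₁ + l₂ + l₃ + 1).factorial : ℝ))^2
      = (((l₁ + l₂ - l₃).factorial : ℝ) * ((l₁ + l₃ - l₂).factorial : ℝ) *
        ((l₂ + l₃ - l₁).factorial : ℝ)) / ((l₁ + l₂ + l₃ + 1).factorial : ℝ) := by
    apply Real.sq_sqrt
    have := (factR_pos (l₁+l₂-l₃)).le
    have := (factR_pos (l₁+l₃-l₂)).le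
    have := (factR_pos (l₂+l₃-l₁)).le
    have := (factR_pos (l₁+l₂+l₃+1)).le
    positivity
  rw [ha, hb, he, e1, e2, e3, e5]
  unfold Lr
  rw [e4]
  rw [Nat.factorial_succ (2*J)]
  have := (factR_pos x).ne'
  have := (factR_pos y).ne'
  have := (factR_pos z).ne'
  have := (factR_pos J).ne'
  have := (factR_pos (2*x)).ne'
  have := (factR_pos (2*y)).ne'
  have := (factR_pos (2*z)).ne'
  have := (factR_pos (2*J)).ne'
  have h2J : ((2*J+1 : ℕ):ℝ) ≠ 0 := by positivity
  push_cast
  field_simp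
  ring

lemma one_le_sqrt_nat (n : ℕ) : 1 ≤ Real.sqrt ((n:ℝ)+1) := by
  have h := Real.sqrt_le_sqrt (show (1:ℝ) ≤ (n:ℝ)+1 by linarith [(Nat.cast_nonneg n : (0:ℝ) ≤ n)])
  simpa using h

lemma sqrt_nat_pos (n : ℕ) : 0 < Real.sqrt ((n:ℝ)+1) := Real.sqrt_pos.2 (by positivity)

lemma CG0_sq_le_gen {l₁ l₂ l₃ x y z : ℕ} (hx : l₂+l₃ = l₁+2*x) (hy : l₁+l₃ = l₂+2*y)
    (hz : l₁+l₂ = l₃+2*z) :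
    CG0 l₁ l₂ l₃ ^ 2 ≤ 8 * Real.sqrt ((l₃:ℝ)+1) /
      (Real.sqrt ((x:ℝ)+1) * Real.sqrt ((y:ℝ)+1) * Real.sqrt ((z:ℝ)+1)) := by
  have hcond : Even (l₁ + l₂ + l₃) ∧ l₃ ≤ l₁ + l₂ ∧ l₁ ≤ l₂ + l₃ ∧ l₂ ≤ l₁ + l₃ :=
    ⟨⟨l₃+z, by omega⟩, by omega, by omega, by omega⟩
  rw [CG0_sq_eq hcond]
  set J := (l₁+l₂+l₃)/2 with hJdef
  have hJ : l₁+l₂+l₃ = 2*J := by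
    obtain ⟨k, hk⟩ := hcond.1; omega
  have ex : J - l₁ = x := by omega
  have ey : J - l₂ = y := by omega
  have ez : J - l₃ = z := by omega
  rw [ex, ey, ez]
  have exyz : x+y+z = J := by omega
  have sx := sqrt_nat_pos x
  have sy := sqrt_nat_pos y
  have sz := sqrt_nat_pos z
  have sL := sqrt_nat_pos l₃
  have sJ := sqrt_nat_pos J
  have hLr := Lr_le x y z
  have hsum : (x:ℝ)+(y:ℝ)+(z:ℝ)+1 = (J:ℝ)+1 := by
    push_cast [← exyz]; ring
  rw [hsum] at hLr
  have hfac : (2*(l₃:ℝ)+1) / (2*(J:ℝ)+1) * (4 * Real.sqrt ((J:ℝ)+1)) ≤ 8 * Real.sqrt ((l₃:ℝ)+1) := by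
    have hl₃J : (l₃:ℝ) ≤ (J:ℝ) := by exact_mod_cast (by omega : l₃ ≤ J)
    have hmono : Real.sqrt ((l₃:ℝ)+1) ≤ Real.sqrt ((J:ℝ)+1) := Real.sqrt_le_sqrt (by linarith)
    have hJ2 : Real.sqrt ((J:ℝ)+1)^2 = (J:ℝ)+1 := Real.sq_sqrt (by positivity)
    have hL2 : Real.sqrt ((l₃:ℝ)+1)^2 = (l₃:ℝ)+1 := Real.sq_sqrt (by positivity)
    rw [div_mul_eq_mul_div, div_le_iff₀ (by positivity)]
    nlinarith [mul_pos sL sJ, mul_nonneg (mul_nonneg sL.le sJ.le) (sub_nonneg.2 hmono),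
      mul_nonneg sL.le (sub_nonneg.2 hmono)]
  calc (2*(l₃:ℝ)+1) / (2*(J:ℝ)+1) * Lr x y z
      ≤ (2*(l₃:ℝ)+1) / (2*(J:ℝ)+1) * (4 * Real.sqrt ((J:ℝ)+1) /
          (Real.sqrt ((x:ℝ)+1) * Real.sqrt ((y:ℝ)+1) * Real.sqrt ((z:ℝ)+1))) := by
        apply mul_le_mul_of_nonneg_left hLr (by positivity)
    _ = ((2*(l₃:ℝ)+1) / (2*(J:ℝ)+1) * (4 * Real.sqrt ((J:ℝ)+1))) /
          (Real.sqrt ((x:ℝ)+1) * Real.sqrt ((y:ℝ)+1) * Real.sqrt ((z:ℝ)+1)) := by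
        ring
    _ ≤ 8 * Real.sqrt ((l₃:ℝ)+1) /
          (Real.sqrt ((x:ℝ)+1) * Real.sqrt ((y:ℝ)+1) * Real.sqrt ((z:ℝ)+1)) := by
        have hd : 0 < Real.sqrt ((x:ℝ)+1) * Real.sqrt ((y:ℝ)+1) * Real.sqrt ((z:ℝ)+1) := by positivity
        exact (div_le_div_iff_of_pos_right hd).mpr hfac

lemma CG0_sq_ge_gen {l₁ l₂ l₃ x y : ℕ} (hx : l₂+l₃ = l₁+2*x) (hy : l₁+l₃ = l₂+2*y)
    (hz : l₁+l₂ = l₃) :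
    Real.sqrt ((l₃:ℝ)+1) / (16 * (Real.sqrt ((x:ℝ)+1) * Real.sqrt ((y:ℝ)+1)))
      ≤ CG0 l₁ l₂ l₃ ^ 2 := by
  have hcond : Even (l₁ + l₂ + l₃) ∧ l₃ ≤ l₁ + l₂ ∧ l₁ ≤ l₂ + l₃ ∧ l₂ ≤ l₁ + l₃ :=
    ⟨⟨l₃, by omega⟩, by omega, by omega, by omega⟩
  rw [CG0_sq_eq hcond]
  set J := (l₁+l₂+l₃)/2 with hJdef
  have hJ : l₁+l₂+l₃ = 2*J := by
    obtain ⟨k, hk⟩ := hcond.1; omega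
  have ex : J - l₁ = x := by omega
  have ey : J - l₂ = y := by omega
  have ez : J - l₃ = 0 := by omega
  have eJ : J = l₃ := by omega
  rw [ex, ey, ez, eJ]
  have hLr := Lr_ge x y 0
  have hsum : (x:ℝ)+(y:ℝ)+((0:ℕ):ℝ)+1 = (l₃:ℝ)+1 := by
    push_cast
    have : x + y = l₃ := by omega
    exact_mod_cast by push_cast [← this]; ring
  rw [hsum] at hLr
  have hz0 : Real.sqrt (((0:ℕ):ℝ)+1) = 1 := by norm_num
  rw [hz0, mul_one] at hLr
  have : (2*(l₃:ℝ)+1) / (2*(l₃:ℝ)+1) = 1 := div_self (by positivity)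
  rw [this, one_mul]
  exact hLr

lemma CG0_sq_le_crude (l₁ l₂ l : ℕ) : CG0 l₁ l₂ l ^ 2 ≤ 8 * Real.sqrt ((l:ℝ)+1) := by
  by_cases h : Even (l₁ + l₂ + l) ∧ l ≤ l₁ + l₂ ∧ l₁ ≤ l₂ + l ∧ l₂ ≤ l₁ + l
  · obtain ⟨⟨k, hk⟩, h1, h2, h3⟩ := h
    have hb := CG0_sq_le_gen (l₁ := l₁) (l₂ := l₂) (l₃ := l)
      (x := (l₂+l-l₁)/2) (y := (l₁+l-l₂)/2) (z := (l₁+l₂-l)/2) (by omega) (by omega) (by omega)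
    apply hb.trans
    apply div_le_self (by positivity)
    have d1 := one_le_sqrt_nat ((l₂+l-l₁)/2)
    have d2 := one_le_sqrt_nat ((l₁+l-l₂)/2)
    have d3 := one_le_sqrt_nat ((l₁+l₂-l)/2)
    nlinarith [mul_le_mul d1 d2 zero_le_one (Real.sqrt_nonneg _)]
  · rw [CG0_eq_zero h]
    norm_num

lemma CG0_sq_le_case1 {l₁ l m : ℕ} (t : ℕ) (hm : l = l₁ + m) :
    CG0 l₁ (t + m) l ^ 2 ≤ 8 * Real.sqrt ((l:ℝ)+1) * Real.sqrt ((t:ℝ)+1) /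
      (Real.sqrt ((m:ℝ)+1) * Real.sqrt ((l₁:ℝ)+1)) := by
  by_cases h : Even (l₁ + (t + m) + l) ∧ l ≤ l₁ + (t + m) ∧ l₁ ≤ (t + m) + l ∧ (t + m) ≤ l₁ + l
  · obtain ⟨⟨k, hk⟩, h1, h2, h3⟩ := h
    have hu : ∃ u, t = 2*u ∧ u ≤ l₁ := ⟨t/2, by omega, by omega⟩
    obtain ⟨u, htu, hul⟩ := hu
    have hb := CG0_sq_le_gen (l₁ := l₁) (l₂ := t + m) (l₃ := l)
      (x := m + u) (y := l₁ - u) (z := u) (by omega) (by omega) (by omega)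
    apply hb.trans
    rw [div_le_div_iff₀ (by positivity) (by positivity)]
    have A : Real.sqrt ((m:ℝ)+1) ≤ Real.sqrt (((m+u:ℕ):ℝ)+1) := by
      apply Real.sqrt_le_sqrt; push_cast; linarith [(Nat.cast_nonneg u : (0:ℝ) ≤ u)]
    have B : Real.sqrt ((l₁:ℝ)+1) ≤ Real.sqrt ((t:ℝ)+1) * Real.sqrt (((l₁-u:ℕ):ℝ)+1) := by
      rw [← Real.sqrt_mul (by positivity)]
      apply Real.sqrt_le_sqrt
      have hy : ((l₁-u:ℕ):ℝ) = (l₁:ℝ) - (u:ℝ) := by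
        push_cast [hul]; ring
      have ht : (t:ℝ) = 2*(u:ℝ)  := by exact_mod_cast htu
      have hcu : (u:ℝ) ≤ (l₁:ℝ) := by exact_mod_cast hul
      rw [hy, ht]
      nlinarith [(Nat.cast_nonneg u : (0:ℝ) ≤ u)]
    have C := one_le_sqrt_nat u
    calc 8 * Real.sqrt ((l:ℝ)+1) * (Real.sqrt ((m:ℝ)+1) * Real.sqrt ((l₁:ℝ)+1))
        ≤ 8 * Real.sqrt ((l:ℝ)+1) * (Real.sqrt (((m+u:ℕ):ℝ)+1) *
            (Real.sqrt ((t:ℝ)+1) * Real.sqrt (((l₁-u:ℕ):ℝ)+1))) := by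
          apply mul_le_mul_of_nonneg_left _ (by positivity)
          exact mul_le_mul A B (by positivity) (by positivity)
      _ ≤ 8 * Real.sqrt ((l:ℝ)+1) * (Real.sqrt (((m+u:ℕ):ℝ)+1) *
            (Real.sqrt ((t:ℝ)+1) * Real.sqrt (((l₁-u:ℕ):ℝ)+1)) * Real.sqrt ((u:ℝ)+1)) := by
          apply mul_le_mul_of_nonneg_left _ (by positivity)
          exact le_mul_of_one_le_right (by positivity) C
      _ = 8 * Real.sqrt ((l:ℝ)+1) * Real.sqrt ((t:ℝ)+1) *
            (Real.sqrt (((m+u:ℕ):ℝ)+1) * Real.sqrt (((l₁-u:ℕ):ℝ)+1) * Real.sqrt ((u:ℝ)+1)) := by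
          ring
  · rw [CG0_eq_zero h]
    norm_num
    positivity

lemma CG0_sq_le_case2 {l₁ l m : ℕ} (t : ℕ) (hm : l₁ = l + m) :
    CG0 l₁ (t + m) l ^ 2 ≤ 8 * Real.sqrt ((l:ℝ)+1) / Real.sqrt ((m:ℝ)+1) := by
  by_cases h : Even (l₁ + (t + m) + l) ∧ l ≤ l₁ + (t + m) ∧ l₁ ≤ (t + m) + l ∧ (t + m) ≤ l₁ + l
  · obtain ⟨⟨k, hk⟩, h1, h2, h3⟩ := h
    have hu : ∃ u, t = 2*u ∧ u ≤ l := ⟨t/2, by omega, by omega⟩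
    obtain ⟨u, htu, hul⟩ := hu
    have hb := CG0_sq_le_gen (l₁ := l₁) (l₂ := t + m) (l₃ := l)
      (x := u) (y := l - u) (z := m + u) (by omega) (by omega) (by omega)
    apply hb.trans
    rw [div_le_div_iff₀ (by positivity) (by positivity)]
    have A : Real.sqrt ((m:ℝ)+1) ≤ Real.sqrt (((m+u:ℕ):ℝ)+1) := by
      apply Real.sqrt_le_sqrt; push_cast; linarith [(Nat.cast_nonneg u : (0:ℝ) ≤ u)]
    have C1 := one_le_sqrt_nat u
    have C2 := one_le_sqrt_nat (l - u)
    have s1 := Real.sqrt_nonneg ((u:ℝ)+1)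
    have s2 := Real.sqrt_nonneg (((l-u:ℕ):ℝ)+1)
    have s3 := Real.sqrt_nonneg (((m+u:ℕ):ℝ)+1)
    calc 8 * Real.sqrt ((l:ℝ)+1) * Real.sqrt ((m:ℝ)+1)
        ≤ 8 * Real.sqrt ((l:ℝ)+1) * Real.sqrt (((m+u:ℕ):ℝ)+1) := by
          apply mul_le_mul_of_nonneg_left A (by positivity)
      _ ≤ 8 * Real.sqrt ((l:ℝ)+1) * (Real.sqrt ((u:ℝ)+1) * Real.sqrt (((l-u:ℕ):ℝ)+1) *
            Real.sqrt (((m+u:ℕ):ℝ)+1)) := by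
          apply mul_le_mul_of_nonneg_left _ (by positivity)
          nlinarith [mul_le_mul C1 C2 zero_le_one s1, mul_le_mul_of_nonneg_right
            (mul_le_mul C1 C2 zero_le_one s1) s3]
  · rw [CG0_eq_zero h]
    norm_num
    positivity

lemma CG0_sq_ge_diag {l₁ l : ℕ} (h : l₁ ≤ l) :
    1/(16 * Real.sqrt ((l:ℝ)+1)) ≤ CG0 l₁ (l - l₁) l ^ 2 := by
  have hb := CG0_sq_ge_gen (l₁ := l₁) (l₂ := l - l₁) (l₃ := l)
    (x := l - l₁) (y := l₁) (by omega) (by omega) (by omega)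
  refine le_trans ?_ hb
  rw [div_le_div_iff₀ (by positivity) (by positivity)]
  have key : Real.sqrt (((l-l₁:ℕ):ℝ)+1) * Real.sqrt ((l₁:ℝ)+1) ≤ (l:ℝ)+1 := by
    rw [← Real.sqrt_mul (by positivity)]
    have h1 : ((l-l₁:ℕ):ℝ) = (l:ℝ) - (l₁:ℝ) := by push_cast [h]; ring
    rw [h1]
    have h2 : ((l:ℝ)-(l₁:ℝ)+1) * ((l₁:ℝ)+1) ≤ ((l:ℝ)+1)^2 := by
      nlinarith [(Nat.cast_nonneg l₁ : (0:ℝ) ≤ l₁), (Nat.cast_nonneg l : (0:ℝ) ≤ l),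
        sq_nonneg ((l:ℝ) - 2*(l₁:ℝ)), (by exact_mod_cast h : (l₁:ℝ) ≤ (l:ℝ))]
    calc Real.sqrt (((l:ℝ)-(l₁:ℝ)+1) * ((l₁:ℝ)+1)) ≤ Real.sqrt (((l:ℝ)+1)^2) :=
          Real.sqrt_le_sqrt h2
      _ = (l:ℝ)+1 := Real.sqrt_sq (by positivity)
  have hL := Real.sq_sqrt (show (0:ℝ) ≤ (l:ℝ)+1 by positivity)
  have hLn := Real.sqrt_nonneg ((l:ℝ)+1)
  nlinarith [key]

lemma summable_poly_exp (β : ℝ) :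
    Summable (fun n : ℕ => ((n:ℝ)+1)^β * Real.exp (-(n:ℝ))) := by
  have h0 : Filter.Tendsto (fun n:ℕ => (((n:ℝ)+1))^β * Real.exp (-((1:ℝ)/2)*((n:ℝ)+1)))
      Filter.atTop (nhds 0) := by
    have := tendsto_rpow_mul_exp_neg_mul_atTop_nhds_zero β (1/2) (by norm_num)
    exact this.comp (Filter.tendsto_atTop_add_const_right Filter.atTop 1 tendsto_natCast_atTop_atTop)
  have h1 : ∀ᶠ n:ℕ in Filter.atTop,
      |((n:ℝ)+1)^β * Real.exp (-((1:ℝ)/2)*((n:ℝ)+1))| < 1 := by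
    have h2 := Metric.tendsto_nhds.mp h0 1 one_pos
    filter_upwards [h2] with n hn
    rwa [Real.dist_eq, sub_zero] at hn
  apply Summable.of_norm_bounded_eventually_nat
    (g := fun n => Real.exp ((1:ℝ)/2) * (Real.exp (-(1:ℝ)/2))^n)
  · exact (summable_geometric_of_lt_one (by positivity)
      (by rw [Real.exp_lt_one_iff]; norm_num)).mul_left _
  · filter_upwards [h1] with n hn
    have hnn : (0:ℝ) ≤ ((n:ℝ)+1)^β * Real.exp (-((1:ℝ)/2)*((n:ℝ)+1)) := by positivity
    have hle : ((n:ℝ)+1)^β * Real.exp (-((1:ℝ)/2)*((n:ℝ)+1)) ≤ 1 := by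
      rw [abs_of_nonneg hnn] at hn; linarith
    have hsplit : Real.exp (-(n:ℝ)) =
        Real.exp (-((1:ℝ)/2)*((n:ℝ)+1)) * (Real.exp ((1:ℝ)/2) * (Real.exp (-(1:ℝ)/2))^n) := by
      rw [← Real.exp_nat_mul, ← Real.exp_add, ← Real.exp_add]
      ring_nf
    have hpos : (0:ℝ) ≤ Real.exp ((1:ℝ)/2) * (Real.exp (-(1:ℝ)/2))^n := by positivity
    rw [Real.norm_eq_abs, abs_of_nonneg (by positivity)]
    calc ((n:ℝ)+1)^β * Real.exp (-(n:ℝ))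
        = (((n:ℝ)+1)^β * Real.exp (-((1:ℝ)/2)*((n:ℝ)+1))) *
          (Real.exp ((1:ℝ)/2) * (Real.exp (-(1:ℝ)/2))^n) := by rw [hsplit]; ring
      _ ≤ 1 * (Real.exp ((1:ℝ)/2) * (Real.exp (-(1:ℝ)/2))^n) := by
          apply mul_le_mul_of_nonneg_right hle hpos
      _ = Real.exp ((1:ℝ)/2) * (Real.exp (-(1:ℝ)/2))^n := one_mul _

lemma le_tsum_poly_exp (β : ℝ) (n : ℕ) :
    ((n:ℝ)+1)^β * Real.exp (-(n:ℝ)) ≤ ∑' t:ℕ, ((t:ℝ)+1)^β * Real.exp (-(t:ℝ)) :=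
  Summable.le_tsum (summable_poly_exp β) n (fun t _ => by positivity)

lemma one_le_tsum_poly_exp (β : ℝ) : 1 ≤ ∑' t:ℕ, ((t:ℝ)+1)^β * Real.exp (-(t:ℝ)) := by
  have := le_tsum_poly_exp β 0
  simpa using this

lemma rpow_half_div {P : ℝ} (hP : 1 ≤ P) (β : ℝ) :
    P^(β+1) / Real.sqrt P = P^(β+(1:ℝ)/2) := by
  rw [Real.sqrt_eq_rpow, ← Real.rpow_sub (by linarith)]
  congr 1
  ring

lemma F_summable (Γ : ℕ → ℝ) (l l₁ : ℕ) :
    Summable (fun l₂ => Γ l₁ * Γ l₂ * CG0 l₁ l₂ l ^ 2) := by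
  apply summable_of_ne_finset_zero (s := Finset.range (l₁+l+1))
  intro l₂ hl₂
  rw [Finset.mem_range, not_lt] at hl₂
  have : CG0 l₁ l₂ l = 0 := CG0_eq_zero (fun hc => by
    have := hc.2.2.2; omega)
  simp [this]

lemma term_bound_case1 (α b : ℝ) (hα : 0 ≤ α) (hb : 0 < b) (Γ : ℕ → ℝ)
    (hnn : ∀ n, 0 ≤ Γ n)
    (hub : ∀ n : ℕ, Γ n ≤ 2*b*((n:ℝ)+1)^(α+1) * Real.exp (-(n:ℝ)))
    {l₁ l m : ℕ} (hm : l = l₁ + m) (t : ℕ) :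
    Γ l₁ * Γ (t+m) * CG0 l₁ (t+m) l ^ 2 ≤
      32*b^2 * (((l:ℝ)+1)^(2*α+3/2) * Real.exp (-(l:ℝ))) *
        (((t:ℝ)+1)^(α+3/2) * Real.exp (-(t:ℝ))) := by
  have c0 := CG0_sq_le_case1 (l₁ := l₁) (l := l) (m := m) t hm
  have hP : (1:ℝ) ≤ (l₁:ℝ)+1 := by linarith [(Nat.cast_nonneg l₁ : (0:ℝ) ≤ l₁)]
  have hM : (1:ℝ) ≤ (m:ℝ)+1 := by linarith [(Nat.cast_nonneg m : (0:ℝ) ≤ m)]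
  have hT : (1:ℝ) ≤ (t:ℝ)+1 := by linarith [(Nat.cast_nonneg t : (0:ℝ) ≤ t)]
  have hL : (1:ℝ) ≤ (l:ℝ)+1 := by linarith [(Nat.cast_nonneg l : (0:ℝ) ≤ l)]
  have sP := sqrt_nat_pos l₁
  have sM := sqrt_nat_pos m
  have sT := sqrt_nat_pos t
  have sL := sqrt_nat_pos l
  have step0 : Γ l₁ * Γ (t+m) * CG0 l₁ (t+m) l ^ 2 ≤
      (2*b*((l₁:ℝ)+1)^(α+1) * Real.exp (-(l₁:ℝ))) *
      (2*b*(((t+m:ℕ):ℝ)+1)^(α+1) * Real.exp (-((t+m:ℕ):ℝ))) *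
      (8 * Real.sqrt ((l:ℝ)+1) * Real.sqrt ((t:ℝ)+1) /
        (Real.sqrt ((m:ℝ)+1) * Real.sqrt ((l₁:ℝ)+1))) := by
    apply mul_le_mul (mul_le_mul (hub l₁) (hub (t+m)) (hnn _) (by positivity)) c0
      (sq_nonneg _) (by positivity)
  apply step0.trans
  have hQ : ((t+m:ℕ):ℝ)+1 ≤ ((t:ℝ)+1)*((m:ℝ)+1) := by
    push_cast
    nlinarith [(Nat.cast_nonneg t : (0:ℝ) ≤ t), (Nat.cast_nonneg m : (0:ℝ) ≤ m)]
  have hee : Real.exp (-(l₁:ℝ)) * Real.exp (-((t+m:ℕ):ℝ)) =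
      Real.exp (-(l:ℝ)) * Real.exp (-(t:ℝ)) := by
    rw [← Real.exp_add, ← Real.exp_add]
    congr 1
    have : (l:ℝ) = (l₁:ℝ) + (m:ℝ) := by exact_mod_cast hm
    push_cast
    linarith
  have hTT : ((t:ℝ)+1)^(α+1) * Real.sqrt ((t:ℝ)+1) = ((t:ℝ)+1)^(α+3/2) := by
    rw [Real.sqrt_eq_rpow, ← Real.rpow_add (by linarith)]
    congr 1
    ring
  have hPM : ((l₁:ℝ)+1)*((m:ℝ)+1) ≤ ((l:ℝ)+1)*((l:ℝ)+1) := by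
    have : (l:ℝ) = (l₁:ℝ) + (m:ℝ) := by exact_mod_cast hm
    nlinarith [(Nat.cast_nonneg l₁ : (0:ℝ) ≤ l₁), (Nat.cast_nonneg m : (0:ℝ) ≤ m)]
  calc (2*b*((l₁:ℝ)+1)^(α+1) * Real.exp (-(l₁:ℝ))) *
      (2*b*(((t+m:ℕ):ℝ)+1)^(α+1) * Real.exp (-((t+m:ℕ):ℝ))) *
      (8 * Real.sqrt ((l:ℝ)+1) * Real.sqrt ((t:ℝ)+1) /
        (Real.sqrt ((m:ℝ)+1) * Real.sqrt ((l₁:ℝ)+1)))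
      ≤ (2*b*((l₁:ℝ)+1)^(α+1) * Real.exp (-(l₁:ℝ))) *
      (2*b*(((t:ℝ)+1)*((m:ℝ)+1))^(α+1) * Real.exp (-((t+m:ℕ):ℝ))) *
      (8 * Real.sqrt ((l:ℝ)+1) * Real.sqrt ((t:ℝ)+1) /
        (Real.sqrt ((m:ℝ)+1) * Real.sqrt ((l₁:ℝ)+1))) := by
        gcongr
    _ = 32*b^2 * (((l₁:ℝ)+1)^(α+1) / Real.sqrt ((l₁:ℝ)+1)) *
        (((m:ℝ)+1)^(α+1) / Real.sqrt ((m:ℝ)+1)) *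
        (((t:ℝ)+1)^(α+1) * Real.sqrt ((t:ℝ)+1)) * Real.sqrt ((l:ℝ)+1) *
        (Real.exp (-(l₁:ℝ)) * Real.exp (-((t+m:ℕ):ℝ))) := by
        rw [Real.mul_rpow (by linarith) (by linarith)]
        field_simp
        ring
    _ = 32*b^2 * (((l₁:ℝ)+1)^(α+(1:ℝ)/2) * ((m:ℝ)+1)^(α+(1:ℝ)/2)) *
        (((t:ℝ)+1)^(α+3/2)) * Real.sqrt ((l:ℝ)+1) *
        (Real.exp (-(l:ℝ)) * Real.exp (-(t:ℝ))) := by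
        rw [rpow_half_div hP, rpow_half_div hM, hTT, hee]
        ring
    _ ≤ 32*b^2 * ((((l:ℝ)+1)*((l:ℝ)+1))^(α+(1:ℝ)/2)) *
        (((t:ℝ)+1)^(α+3/2)) * Real.sqrt ((l:ℝ)+1) *
        (Real.exp (-(l:ℝ)) * Real.exp (-(t:ℝ))) := by
        rw [← Real.mul_rpow (by linarith) (by linarith)]
        gcongr
    _ = 32*b^2 * (((l:ℝ)+1)^(α+(1:ℝ)/2) * ((l:ℝ)+1)^(α+(1:ℝ)/2) * ((l:ℝ)+1)^((1:ℝ)/2)) *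
        ((t:ℝ)+1)^(α+3/2) * (Real.exp (-(l:ℝ)) * Real.exp (-(t:ℝ))) := by
        rw [Real.mul_rpow (by linarith) (by linarith), Real.sqrt_eq_rpow]
        ring
    _ = 32*b^2 * (((l:ℝ)+1)^(2*α+3/2)) *
        ((t:ℝ)+1)^(α+3/2) * (Real.exp (-(l:ℝ)) * Real.exp (-(t:ℝ))) := by
        rw [← Real.rpow_add (show (0:ℝ) < (l:ℝ)+1 by linarith),
          ← Real.rpow_add (show (0:ℝ) < (l:ℝ)+1 by linarith)]
        congr 2
        ring
    _ = 32*b^2 * (((l:ℝ)+1)^(2*α+3/2) * Real.exp (-(l:ℝ))) *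
        (((t:ℝ)+1)^(α+3/2) * Real.exp (-(t:ℝ))) := by ring

lemma term_bound_case2 (α b : ℝ) (hα : 0 ≤ α) (hb : 0 < b) (Γ : ℕ → ℝ)
    (hnn : ∀ n, 0 ≤ Γ n)
    (hub : ∀ n : ℕ, Γ n ≤ 2*b*((n:ℝ)+1)^(α+1) * Real.exp (-(n:ℝ)))
    {l₁ l m : ℕ} (hm : l₁ = l + m) (t : ℕ) :
    Γ l₁ * Γ (t+m) * CG0 l₁ (t+m) l ^ 2 ≤
      32*b^2 * (∑' s:ℕ, ((s:ℝ)+1)^(2*α+3/2) * Real.exp (-(s:ℝ))) *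
        (((l:ℝ)+1)^(2*α+3/2) * Real.exp (-(l:ℝ))) *
        (((t:ℝ)+1)^(α+3/2) * Real.exp (-(t:ℝ))) := by
  have c0 := CG0_sq_le_case2 (l₁ := l₁) (l := l) (m := m) t hm
  have hP : (1:ℝ) ≤ (l₁:ℝ)+1 := by linarith [(Nat.cast_nonneg l₁ : (0:ℝ) ≤ l₁)]
  have hM : (1:ℝ) ≤ (m:ℝ)+1 := by linarith [(Nat.cast_nonneg m : (0:ℝ) ≤ m)]
  have hT : (1:ℝ) ≤ (t:ℝ)+1 := by linarith [(Nat.cast_nonneg t : (0:ℝ) ≤ t)]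
  have hL : (1:ℝ) ≤ (l:ℝ)+1 := by linarith [(Nat.cast_nonneg l : (0:ℝ) ≤ l)]
  have sM := sqrt_nat_pos m
  have sL := sqrt_nat_pos l
  have step0 : Γ l₁ * Γ (t+m) * CG0 l₁ (t+m) l ^ 2 ≤
      (2*b*((l₁:ℝ)+1)^(α+1) * Real.exp (-(l₁:ℝ))) *
      (2*b*(((t+m:ℕ):ℝ)+1)^(α+1) * Real.exp (-((t+m:ℕ):ℝ))) *
      (8 * Real.sqrt ((l:ℝ)+1) / Real.sqrt ((m:ℝ)+1)) := by
    apply mul_le_mul (mul_le_mul (hub l₁) (hub (t+m)) (hnn _) (by positivity)) c0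
      (sq_nonneg _) (by positivity)
  apply step0.trans
  have hQ : ((t+m:ℕ):ℝ)+1 ≤ ((t:ℝ)+1)*((m:ℝ)+1) := by
    push_cast
    nlinarith [(Nat.cast_nonneg t : (0:ℝ) ≤ t), (Nat.cast_nonneg m : (0:ℝ) ≤ m)]
  have hP2 : ((l₁:ℝ)+1) ≤ ((l:ℝ)+1)*((m:ℝ)+1) := by
    have : (l₁:ℝ) = (l:ℝ) + (m:ℝ) := by exact_mod_cast hm
    nlinarith [(Nat.cast_nonneg l : (0:ℝ) ≤ l), (Nat.cast_nonneg m : (0:ℝ) ≤ m)]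
  have hee : Real.exp (-(l₁:ℝ)) * Real.exp (-((t+m:ℕ):ℝ)) =
      Real.exp (-(l:ℝ)) * Real.exp (-(t:ℝ)) * (Real.exp (-(m:ℝ)) * Real.exp (-(m:ℝ))) := by
    rw [← Real.exp_add, ← Real.exp_add, ← Real.exp_add, ← Real.exp_add]
    congr 1
    have : (l₁:ℝ) = (l:ℝ) + (m:ℝ) := by exact_mod_cast hm
    push_cast
    linarith
  have hMM : ((m:ℝ)+1)^(α+1) * ((m:ℝ)+1)^(α+1) / Real.sqrt ((m:ℝ)+1)
      = ((m:ℝ)+1)^(2*α+3/2) := by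
    rw [← Real.rpow_add (by linarith), Real.sqrt_eq_rpow, ← Real.rpow_sub (by linarith)]
    congr 1
    ring
  have hLL : ((l:ℝ)+1)^(α+1) * Real.sqrt ((l:ℝ)+1) = ((l:ℝ)+1)^(α+3/2) := by
    rw [Real.sqrt_eq_rpow, ← Real.rpow_add (by linarith)]
    congr 1
    ring
  have hK2 : ((m:ℝ)+1)^(2*α+3/2) * Real.exp (-(m:ℝ)) ≤
      ∑' s:ℕ, ((s:ℝ)+1)^(2*α+3/2) * Real.exp (-(s:ℝ)) := le_tsum_poly_exp _ m
  have hTexp : ((t:ℝ)+1)^(α+1) ≤ ((t:ℝ)+1)^(α+3/2) :=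
    Real.rpow_le_rpow_of_exponent_le hT (by linarith)
  have hLexp : ((l:ℝ)+1)^(α+3/2) ≤ ((l:ℝ)+1)^(2*α+3/2) :=
    Real.rpow_le_rpow_of_exponent_le hL (by linarith)
  have hexpm : Real.exp (-(m:ℝ)) ≤ 1 :=
    Real.exp_le_one_iff.mpr (by simp [Nat.cast_nonneg])
  calc (2*b*((l₁:ℝ)+1)^(α+1) * Real.exp (-(l₁:ℝ))) *
      (2*b*(((t+m:ℕ):ℝ)+1)^(α+1) * Real.exp (-((t+m:ℕ):ℝ))) *
      (8 * Real.sqrt ((l:ℝ)+1) / Real.sqrt ((m:ℝ)+1))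
      ≤ (2*b*(((l:ℝ)+1)*((m:ℝ)+1))^(α+1) * Real.exp (-(l₁:ℝ))) *
      (2*b*((((t:ℝ)+1)*((m:ℝ)+1)))^(α+1) * Real.exp (-((t+m:ℕ):ℝ))) *
      (8 * Real.sqrt ((l:ℝ)+1) / Real.sqrt ((m:ℝ)+1)) := by
        gcongr <;> apply Real.rpow_le_rpow (by positivity) (by assumption) (by linarith)
    _ = 32*b^2 * (((m:ℝ)+1)^(α+1) * ((m:ℝ)+1)^(α+1) / Real.sqrt ((m:ℝ)+1)) *
        (((l:ℝ)+1)^(α+1) * Real.sqrt ((l:ℝ)+1)) * ((t:ℝ)+1)^(α+1) *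
        (Real.exp (-(l₁:ℝ)) * Real.exp (-((t+m:ℕ):ℝ))) := by
        rw [Real.mul_rpow (by linarith) (by linarith),
          Real.mul_rpow (by linarith) (by linarith)]
        field_simp
        ring
    _ = 32*b^2 * (((m:ℝ)+1)^(2*α+3/2) * Real.exp (-(m:ℝ))) *
        (((l:ℝ)+1)^(α+3/2) * Real.exp (-(l:ℝ))) *
        (((t:ℝ)+1)^(α+1) * Real.exp (-(t:ℝ))) * Real.exp (-(m:ℝ)) := by
        rw [hMM, hLL, hee]
        ring
    _ ≤ 32*b^2 * (∑' s:ℕ, ((s:ℝ)+1)^(2*α+3/2) * Real.exp (-(s:ℝ))) *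
        (((l:ℝ)+1)^(2*α+3/2) * Real.exp (-(l:ℝ))) *
        (((t:ℝ)+1)^(α+3/2) * Real.exp (-(t:ℝ))) * 1 := by
        have hKnn : (0:ℝ) ≤ ∑' s:ℕ, ((s:ℝ)+1)^(2*α+3/2) * Real.exp (-(s:ℝ)) :=
          tsum_nonneg (fun s => by positivity)
        gcongr <;> first
          | exact hK2
          | exact hLexp
          | exact hTexp
          | exact hexpm
          | positivity
          | ((repeat' apply mul_nonneg) <;> (first | exact hKnn | positivity))
    _ = 32*b^2 * (∑' s:ℕ, ((s:ℝ)+1)^(2*α+3/2) * Real.exp (-(s:ℝ))) *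
        (((l:ℝ)+1)^(2*α+3/2) * Real.exp (-(l:ℝ))) *
        (((t:ℝ)+1)^(α+3/2) * Real.exp (-(t:ℝ))) := by ring

lemma inner_sum_bound (α b : ℝ) (hα : 0 ≤ α) (hb : 0 < b) (Γ : ℕ → ℝ)
    (hnn : ∀ n, 0 ≤ Γ n)
    (hub : ∀ n : ℕ, Γ n ≤ 2*b*((n:ℝ)+1)^(α+1) * Real.exp (-(n:ℝ)))
    (l l₁ : ℕ) :
    (∑' l₂:ℕ, Γ l₁ * Γ l₂ * CG0 l₁ l₂ l ^ 2) ≤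
      32*b^2 * (∑' s:ℕ, ((s:ℝ)+1)^(2*α+3/2) * Real.exp (-(s:ℝ))) *
        (∑' s:ℕ, ((s:ℝ)+1)^(α+3/2) * Real.exp (-(s:ℝ))) *
        (((l:ℝ)+1)^(2*α+3/2) * Real.exp (-(l:ℝ))) := by
  have hK2one : (1:ℝ) ≤ ∑' s:ℕ, ((s:ℝ)+1)^(2*α+3/2) * Real.exp (-(s:ℝ)) :=
    one_le_tsum_poly_exp _
  have hK1nn : (0:ℝ) ≤ ∑' s:ℕ, ((s:ℝ)+1)^(α+3/2) * Real.exp (-(s:ℝ)) :=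
    tsum_nonneg (fun s => by positivity)
  have hsum := F_summable Γ l l₁
  -- m : the gap
  rcases le_or_gt l₁ l with hcase | hcase
  · -- case 1 : l₁ ≤ l, m = l - l₁
    obtain ⟨m, hm⟩ : ∃ m, l = l₁ + m := ⟨l - l₁, by omega⟩
    rw [← Summable.sum_add_tsum_nat_add m hsum]
    have hzero : ∀ i ∈ Finset.range m, Γ l₁ * Γ i * CG0 l₁ i l ^ 2 = 0 := by
      intro i hi
      rw [Finset.mem_range] at hi
      have : CG0 l₁ i l = 0 := CG0_eq_zero (fun hc => by
        have := hc.2.1; omega)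
      simp [this]
    rw [Finset.sum_eq_zero hzero, zero_add]
    have hbd : ∀ t:ℕ, Γ l₁ * Γ (t+m) * CG0 l₁ (t+m) l ^ 2 ≤
        (32*b^2 * (((l:ℝ)+1)^(2*α+3/2) * Real.exp (-(l:ℝ)))) *
          (((t:ℝ)+1)^(α+3/2) * Real.exp (-(t:ℝ))) := by
      intro t
      have := term_bound_case1 α b hα hb Γ hnn hub hm t
      linarith [this]
    calc (∑' t:ℕ, Γ l₁ * Γ (t+m) * CG0 l₁ (t+m) l ^ 2)
        ≤ ∑' t:ℕ, (32*b^2 * (((l:ℝ)+1)^(2*α+3/2) * Real.exp (-(l:ℝ)))) *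
            (((t:ℝ)+1)^(α+3/2) * Real.exp (-(t:ℝ))) := by
          apply Summable.tsum_le_tsum hbd ((summable_nat_add_iff
            (f := fun l₂ => Γ l₁ * Γ l₂ * CG0 l₁ l₂ l ^ 2) m).mpr hsum)
            ((summable_poly_exp _).mul_left _)
      _ = (32*b^2 * (((l:ℝ)+1)^(2*α+3/2) * Real.exp (-(l:ℝ)))) *
            (∑' s:ℕ, ((s:ℝ)+1)^(α+3/2) * Real.exp (-(s:ℝ))) := by
          rw [tsum_mul_left]
      _ ≤ 32*b^2 * (∑' s:ℕ, ((s:ℝ)+1)^(2*α+3/2) * Real.exp (-(s:ℝ))) *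
            (∑' s:ℕ, ((s:ℝ)+1)^(α+3/2) * Real.exp (-(s:ℝ))) *
            (((l:ℝ)+1)^(2*α+3/2) * Real.exp (-(l:ℝ))) := by
          have h1 : (0:ℝ) ≤ 32*b^2 * (((l:ℝ)+1)^(2*α+3/2) * Real.exp (-(l:ℝ))) := by positivity
          nlinarith [mul_nonneg h1 hK1nn]
  · -- case 2 : l < l₁, m = l₁ - l
    obtain ⟨m, hm⟩ : ∃ m, l₁ = l + m := ⟨l₁ - l, by omega⟩
    rw [← Summable.sum_add_tsum_nat_add m hsum]
    have hzero : ∀ i ∈ Finset.range m, Γ l₁ * Γ i * CG0 l₁ i l ^ 2 = 0 := by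
      intro i hi
      rw [Finset.mem_range] at hi
      have : CG0 l₁ i l = 0 := CG0_eq_zero (fun hc => by
        have := hc.2.2.1; omega)
      simp [this]
    rw [Finset.sum_eq_zero hzero, zero_add]
    have hbd : ∀ t:ℕ, Γ l₁ * Γ (t+m) * CG0 l₁ (t+m) l ^ 2 ≤
        (32*b^2 * (∑' s:ℕ, ((s:ℝ)+1)^(2*α+3/2) * Real.exp (-(s:ℝ))) *
          (((l:ℝ)+1)^(2*α+3/2) * Real.exp (-(l:ℝ)))) *
          (((t:ℝ)+1)^(α+3/2) * Real.exp (-(t:ℝ))) := by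
      intro t
      have := term_bound_case2 α b hα hb Γ hnn hub hm t
      linarith [this]
    calc (∑' t:ℕ, Γ l₁ * Γ (t+m) * CG0 l₁ (t+m) l ^ 2)
        ≤ ∑' t:ℕ, (32*b^2 * (∑' s:ℕ, ((s:ℝ)+1)^(2*α+3/2) * Real.exp (-(s:ℝ))) *
            (((l:ℝ)+1)^(2*α+3/2) * Real.exp (-(l:ℝ)))) *
            (((t:ℝ)+1)^(α+3/2) * Real.exp (-(t:ℝ))) := by
          apply Summable.tsum_le_tsum hbd ((summable_nat_add_iff
            (f := fun l₂ => Γ l₁ * Γ l₂ * CG0 l₁ l₂ l ^ 2) m).mpr hsum)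
            ((summable_poly_exp _).mul_left _)
      _ = (32*b^2 * (∑' s:ℕ, ((s:ℝ)+1)^(2*α+3/2) * Real.exp (-(s:ℝ))) *
            (((l:ℝ)+1)^(2*α+3/2) * Real.exp (-(l:ℝ)))) *
            (∑' s:ℕ, ((s:ℝ)+1)^(α+3/2) * Real.exp (-(s:ℝ))) := by
          rw [tsum_mul_left]
      _ = 32*b^2 * (∑' s:ℕ, ((s:ℝ)+1)^(2*α+3/2) * Real.exp (-(s:ℝ))) *
            (∑' s:ℕ, ((s:ℝ)+1)^(α+3/2) * Real.exp (-(s:ℝ))) *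
            (((l:ℝ)+1)^(2*α+3/2) * Real.exp (-(l:ℝ))) := by ring

lemma outer_summable (Γ : ℕ → ℝ) (hnn : ∀ n, 0 ≤ Γ n) (hΓsum : Summable Γ) (l : ℕ) :
    Summable (fun l₁ => ∑' l₂:ℕ, Γ l₁ * Γ l₂ * CG0 l₁ l₂ l ^ 2) := by
  refine Summable.of_nonneg_of_le
    (f := fun l₁ => Γ l₁ * (∑' n, Γ n) * (8 * Real.sqrt ((l:ℝ)+1)))
    (fun l₁ => tsum_nonneg (fun l₂ => by
      have := hnn l₁; have := hnn l₂; positivity))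
    (fun l₁ => ?_) ((hΓsum.mul_right _).mul_right _)
  calc (∑' l₂:ℕ, Γ l₁ * Γ l₂ * CG0 l₁ l₂ l ^ 2)
      ≤ ∑' l₂:ℕ, Γ l₁ * Γ l₂ * (8 * Real.sqrt ((l:ℝ)+1)) := by
        apply Summable.tsum_le_tsum _ (F_summable Γ l l₁)
          ((hΓsum.mul_left (Γ l₁)).mul_right (8 * Real.sqrt ((l:ℝ)+1)))
        intro l₂
        apply mul_le_mul_of_nonneg_left (CG0_sq_le_crude l₁ l₂ l)
          (mul_nonneg (hnn l₁) (hnn l₂))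
    _ = Γ l₁ * (∑' n, Γ n) * (8 * Real.sqrt ((l:ℝ)+1)) := by
        rw [tsum_mul_right, tsum_mul_left]

lemma denom_lower (α a : ℝ) (hα : 0 ≤ α) (ha : 0 < a) (Γ : ℕ → ℝ)
    (hnn : ∀ n, 0 ≤ Γ n)
    (hlb : ∀ n : ℕ, a*((n:ℝ)+1)^(α+1) * Real.exp (-(n:ℝ)) ≤ Γ n)
    (l : ℕ) (hNsum : Summable (fun l₁ => ∑' l₂:ℕ, Γ l₁ * Γ l₂ * CG0 l₁ l₂ l ^ 2)) :
    a^2/(128*(8:ℝ)^(α+1)) * ((l:ℝ)+1)^(2*α+5/2) * Real.exp (-(l:ℝ)) ≤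
      ∑' l₁:ℕ, ∑' l₂:ℕ, Γ l₁ * Γ l₂ * CG0 l₁ l₂ l ^ 2 := by
  have hL : (1:ℝ) ≤ (l:ℝ)+1 := by linarith [(Nat.cast_nonneg l : (0:ℝ) ≤ l)]
  have h8 : (0:ℝ) < (8:ℝ)^(α+1) := Real.rpow_pos_of_pos (by norm_num) _
  set c₀ : ℝ := a^2/(16*(8:ℝ)^(α+1)) with hc₀
  have hc₀pos : 0 < c₀ := by positivity
  have hwin : ∀ l₁ ∈ Finset.Icc (l/4) (l/2),
      c₀ * ((l:ℝ)+1)^(2*α+3/2) * Real.exp (-(l:ℝ)) ≤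
        ∑' l₂:ℕ, Γ l₁ * Γ l₂ * CG0 l₁ l₂ l ^ 2 := by
    intro l₁ hl₁
    rw [Finset.mem_Icc] at hl₁
    have h14 : l/4 ≤ l₁ := hl₁.1
    have h12 : l₁ ≤ l/2 := hl₁.2
    have hle : l₁ ≤ l := by omega
    have step1 : Γ l₁ * Γ (l - l₁) * CG0 l₁ (l-l₁) l ^ 2 ≤
        ∑' l₂:ℕ, Γ l₁ * Γ l₂ * CG0 l₁ l₂ l ^ 2 :=
      Summable.le_tsum (F_summable Γ l l₁) (l - l₁) (fun j _ => by
        have := hnn l₁; have := hnn j; positivity)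
    refine le_trans ?_ step1
    have step2 : (a*((l₁:ℝ)+1)^(α+1) * Real.exp (-(l₁:ℝ))) *
        (a*(((l-l₁:ℕ):ℝ)+1)^(α+1) * Real.exp (-((l-l₁:ℕ):ℝ))) *
        (1/(16 * Real.sqrt ((l:ℝ)+1))) ≤
        Γ l₁ * Γ (l - l₁) * CG0 l₁ (l-l₁) l ^ 2 := by
      apply mul_le_mul (mul_le_mul (hlb l₁) (hlb (l-l₁)) (by positivity)
        (hnn l₁)) (CG0_sq_ge_diag hle) (by positivity)
        (mul_nonneg (hnn l₁) (hnn (l-l₁)))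
    refine le_trans ?_ step2
    -- now pure computation
    have hee : Real.exp (-(l₁:ℝ)) * Real.exp (-((l-l₁:ℕ):ℝ)) = Real.exp (-(l:ℝ)) := by
      rw [← Real.exp_add]
      congr 1
      have : ((l-l₁:ℕ):ℝ) = (l:ℝ) - (l₁:ℝ) := by
        push_cast [hle]; ring
      rw [this]; ring
    have hP : ((l:ℝ)+1)/4 ≤ (l₁:ℝ)+1 := by
      have : l+1 ≤ 4*(l₁+1) := by omega
      have := (Nat.cast_le (α := ℝ)).mpr this
      push_cast at this
      linarith
    have hP' : ((l:ℝ)+1)/2 ≤ ((l-l₁:ℕ):ℝ)+1 := by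
      have : l+1 ≤ 2*((l-l₁)+1) := by omega
      have := (Nat.cast_le (α := ℝ)).mpr this
      push_cast at this
      linarith
    have hPb : (((l:ℝ)+1)/4)^(α+1) ≤ ((l₁:ℝ)+1)^(α+1) :=
      Real.rpow_le_rpow (by positivity) hP (by linarith)
    have hP'b : (((l:ℝ)+1)/2)^(α+1) ≤ (((l-l₁:ℕ):ℝ)+1)^(α+1) :=
      Real.rpow_le_rpow (by positivity) hP' (by linarith)
    have key : c₀ * ((l:ℝ)+1)^(2*α+3/2) * Real.exp (-(l:ℝ)) =
        (a*(((l:ℝ)+1)/4)^(α+1)) * (a*(((l:ℝ)+1)/2)^(α+1)) *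
          (1/(16 * Real.sqrt ((l:ℝ)+1))) * Real.exp (-(l:ℝ)) := by
      rw [Real.div_rpow (by linarith) (by norm_num), Real.div_rpow (by linarith) (by norm_num)]
      have h42 : (4:ℝ)^(α+1) * (2:ℝ)^(α+1) = (8:ℝ)^(α+1) := by
        rw [← Real.mul_rpow (by norm_num) (by norm_num)]
        norm_num
      have hsplit : ((l:ℝ)+1)^(α+1) * ((l:ℝ)+1)^(α+1) / Real.sqrt ((l:ℝ)+1)
          = ((l:ℝ)+1)^(2*α+3/2) := by
        rw [← Real.rpow_add (by linarith), Real.sqrt_eq_rpow,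
          ← Real.rpow_sub (by linarith)]
        congr 1
        ring
      have s0 := (sqrt_nat_pos l).ne'
      have h4ne : ((4:ℝ))^(α+1) ≠ 0 := (Real.rpow_pos_of_pos (by norm_num) _).ne'
      have h2ne : ((2:ℝ))^(α+1) ≠ 0 := (Real.rpow_pos_of_pos (by norm_num) _).ne'
      rw [hc₀, ← hsplit, ← h42]
      field_simp
    rw [key]
    have hexpnn : (0:ℝ) ≤ Real.exp (-(l:ℝ)) := (Real.exp_pos _).le
    rw [← hee]
    have hrw : a*(((l:ℝ)+1)/4)^(α+1) * (a*(((l:ℝ)+1)/2)^(α+1)) *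
        (1/(16 * Real.sqrt ((l:ℝ)+1))) * (Real.exp (-(l₁:ℝ)) * Real.exp (-((l-l₁:ℕ):ℝ)))
        = (a*(((l:ℝ)+1)/4)^(α+1) * Real.exp (-(l₁:ℝ))) *
          (a*(((l:ℝ)+1)/2)^(α+1) * Real.exp (-((l-l₁:ℕ):ℝ))) *
          (1/(16 * Real.sqrt ((l:ℝ)+1))) := by ring
    rw [hrw]
    gcongr
  -- sum over the window
  have hsum_ge : ∑ l₁ ∈ Finset.Icc (l/4) (l/2), (∑' l₂:ℕ, Γ l₁ * Γ l₂ * CG0 l₁ l₂ l ^ 2) ≤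
      ∑' l₁:ℕ, ∑' l₂:ℕ, Γ l₁ * Γ l₂ * CG0 l₁ l₂ l ^ 2 :=
    Summable.sum_le_tsum _ (fun i _ => tsum_nonneg (fun l₂ => by
      have := hnn i; have := hnn l₂; positivity)) hNsum
  refine le_trans ?_ hsum_ge
  have hcard : ((Finset.Icc (l/4) (l/2)).card : ℝ) ≥ ((l:ℝ)+1)/8 := by
    rw [Nat.card_Icc]
    have : 8*(l/2+1-l/4) ≥ l+1 := by omega
    have := (Nat.cast_le (α := ℝ)).mpr this
    push_cast at this ⊢
    linarith
  have hlow := Finset.card_nsmul_le_sum (Finset.Icc (l/4) (l/2)) _ _ hwin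
  rw [nsmul_eq_mul] at hlow
  refine le_trans ?_ hlow
  have hfin : ((l:ℝ)+1)/8 * (c₀ * ((l:ℝ)+1)^(2*α+3/2) * Real.exp (-(l:ℝ))) =
      a^2/(128*(8:ℝ)^(α+1)) * ((l:ℝ)+1)^(2*α+5/2) * Real.exp (-(l:ℝ)) := by
    have hLrw : ((l:ℝ)+1) * ((l:ℝ)+1)^(2*α+3/2) = ((l:ℝ)+1)^(2*α+5/2) := by
      nth_rewrite 1 [show ((l:ℝ)+1) = ((l:ℝ)+1)^(1:ℝ) by rw [Real.rpow_one]]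
      rw [← Real.rpow_add (by linarith)]
      congr 1
      ring
    rw [hc₀, ← hLrw]
    field_simp
    ring
  rw [← hfin]
  apply mul_le_mul_of_nonneg_right hcard (by positivity)


open Filter in
/-- For exponentially decaying angular power spectra `C_l ≍ (l+1)^α e^{−l}`,
the sufficient condition for the high-frequency CLT in the quadratic case holds:
`sup_{l₁} (Σ_{l₂} Γ_{l₁}Γ_{l₂}C(l₁,l₂,l)²)/(Σ_{l₁,l₂} Γ_{l₁}Γ_{l₂}C(l₁,l₂,l)²) → 0`. -/
theorem exponential_spectrum_clt_condition
    (α : ℝ) (hα : 0 ≤ α) (C : ℕ → ℝ) (hCpos : ∀ l, 0 < C l)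
    (a b : ℝ) (ha : 0 < a) (hb : 0 < b)
    (hlow : ∀ l : ℕ, a * ((l : ℝ) + 1) ^ α * Real.exp (-(l : ℝ)) ≤ C l)
    (hupp : ∀ l : ℕ, C l ≤ b * ((l : ℝ) + 1) ^ α * Real.exp (-(l : ℝ)))
    (Γ : ℕ → ℝ) (hΓ : ∀ l, Γ l = (2 * (l : ℝ) + 1) * C l) :
    Tendsto
      (fun l : ℕ => ⨆ l₁ : ℕ,
        (∑' l₂ : ℕ, Γ l₁ * Γ l₂ * CG0 l₁ l₂ l ^ 2) /
          (∑' l₁ : ℕ, ∑' l₂ : ℕ, Γ l₁ * Γ l₂ * CG0 l₁ l₂ l ^ 2))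
      atTop (nhds 0) := by
  have hΓpos : ∀ n, 0 < Γ n := fun n => by
    rw [hΓ n]
    have := hCpos n
    positivity
  have hΓnn : ∀ n, 0 ≤ Γ n := fun n => (hΓpos n).le
  have hrpow1 : ∀ n:ℕ, ((n:ℝ)+1)^(α+1) = ((n:ℝ)+1)^α * ((n:ℝ)+1) :=
    fun n => Real.rpow_add_one (by positivity) α
  have hub : ∀ n:ℕ, Γ n ≤ 2*b*((n:ℝ)+1)^(α+1) * Real.exp (-(n:ℝ)) := by
    intro n
    rw [hΓ n, hrpow1 n]
    calc (2*(n:ℝ)+1) * C n ≤ (2*(n:ℝ)+2) * (b * ((n:ℝ)+1)^α * Real.exp (-(n:ℝ))) := by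
          apply mul_le_mul (by linarith) (hupp n) (hCpos n).le (by positivity)
      _ = 2*b*(((n:ℝ)+1)^α * ((n:ℝ)+1)) * Real.exp (-(n:ℝ)) := by ring
  have hlb : ∀ n:ℕ, a*((n:ℝ)+1)^(α+1) * Real.exp (-(n:ℝ)) ≤ Γ n := by
    intro n
    rw [hΓ n, hrpow1 n]
    calc a*(((n:ℝ)+1)^α * ((n:ℝ)+1)) * Real.exp (-(n:ℝ))
        = ((n:ℝ)+1) * (a * ((n:ℝ)+1)^α * Real.exp (-(n:ℝ))) := by ring
      _ ≤ (2*(n:ℝ)+1) * C n := by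
          apply mul_le_mul (by linarith [(Nat.cast_nonneg n : (0:ℝ) ≤ n)]) (hlow n)
            (by positivity) (by linarith [(Nat.cast_nonneg n : (0:ℝ) ≤ n)])
  have hΓsum : Summable Γ :=
    Summable.of_nonneg_of_le hΓnn hub
      (((summable_poly_exp (α+1)).mul_left (2*b)).congr (fun n => by ring))
  have hNsum : ∀ l, Summable (fun l₁ => ∑' l₂:ℕ, Γ l₁ * Γ l₂ * CG0 l₁ l₂ l ^ 2) :=
    fun l => outer_summable Γ hΓnn hΓsum l
  set K2 : ℝ := ∑' s:ℕ, ((s:ℝ)+1)^(2*α+3/2) * Real.exp (-(s:ℝ)) with hK2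
  set K1 : ℝ := ∑' s:ℕ, ((s:ℝ)+1)^(α+3/2) * Real.exp (-(s:ℝ)) with hK1
  have hK2nn : 0 ≤ K2 := tsum_nonneg (fun s => by positivity)
  have hK1nn : 0 ≤ K1 := tsum_nonneg (fun s => by positivity)
  set A : ℝ := 32*b^2*K2*K1 with hA
  have hAnn : 0 ≤ A := by positivity
  set c₁ : ℝ := a^2/(128*(8:ℝ)^(α+1)) with hc₁
  have hc₁pos : 0 < c₁ := by
    have : (0:ℝ) < (8:ℝ)^(α+1) := Real.rpow_pos_of_pos (by norm_num) _
    positivity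
  have hNub : ∀ l l₁, (∑' l₂:ℕ, Γ l₁ * Γ l₂ * CG0 l₁ l₂ l ^ 2) ≤
      A * (((l:ℝ)+1)^(2*α+3/2) * Real.exp (-(l:ℝ))) := by
    intro l l₁
    have := inner_sum_bound α b hα hb Γ hΓnn hub l l₁
    calc (∑' l₂:ℕ, Γ l₁ * Γ l₂ * CG0 l₁ l₂ l ^ 2)
        ≤ 32*b^2 * K2 * K1 * (((l:ℝ)+1)^(2*α+3/2) * Real.exp (-(l:ℝ))) := this
      _ = A * (((l:ℝ)+1)^(2*α+3/2) * Real.exp (-(l:ℝ))) := by rw [hA]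
  have hDlb : ∀ l : ℕ, c₁ * ((l:ℝ)+1)^(2*α+5/2) * Real.exp (-(l:ℝ)) ≤
      ∑' l₁:ℕ, ∑' l₂:ℕ, Γ l₁ * Γ l₂ * CG0 l₁ l₂ l ^ 2 :=
    fun l => denom_lower α a hα ha Γ hΓnn hlb l (hNsum l)
  have hDpos : ∀ l, 0 < ∑' l₁:ℕ, ∑' l₂:ℕ, Γ l₁ * Γ l₂ * CG0 l₁ l₂ l ^ 2 := by
    intro l
    refine lt_of_lt_of_le ?_ (hDlb l)
    have h1 : (0:ℝ) < ((l:ℝ)+1)^(2*α+5/2) := Real.rpow_pos_of_pos (by positivity) _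
    positivity
  have hratio : ∀ l l₁, (∑' l₂:ℕ, Γ l₁ * Γ l₂ * CG0 l₁ l₂ l ^ 2) /
      (∑' l₁:ℕ, ∑' l₂:ℕ, Γ l₁ * Γ l₂ * CG0 l₁ l₂ l ^ 2) ≤
      (A/c₁) * (1/((l:ℝ)+1)) := by
    intro l l₁
    rw [div_le_iff₀ (hDpos l)]
    have hLpos : (0:ℝ) < (l:ℝ)+1 := by positivity
    have hLrw : ((l:ℝ)+1)^(2*α+5/2) = ((l:ℝ)+1) * ((l:ℝ)+1)^(2*α+3/2) := by
      nth_rewrite 2 [show ((l:ℝ)+1) = ((l:ℝ)+1)^(1:ℝ) by rw [Real.rpow_one]]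
      rw [← Real.rpow_add hLpos]
      congr 1
      ring
    calc (∑' l₂:ℕ, Γ l₁ * Γ l₂ * CG0 l₁ l₂ l ^ 2)
        ≤ A * (((l:ℝ)+1)^(2*α+3/2) * Real.exp (-(l:ℝ))) := hNub l l₁
      _ = (A/c₁) * (1/((l:ℝ)+1)) * (c₁ * ((l:ℝ)+1)^(2*α+5/2) * Real.exp (-(l:ℝ))) := by
          rw [hLrw]
          field_simp
      _ ≤ (A/c₁) * (1/((l:ℝ)+1)) * (∑' l₁:ℕ, ∑' l₂:ℕ, Γ l₁ * Γ l₂ * CG0 l₁ l₂ l ^ 2) := by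
          apply mul_le_mul_of_nonneg_left (hDlb l) (by positivity)
      _ = (A/c₁) * (1/((l:ℝ)+1)) * (∑' l₁:ℕ, ∑' l₂:ℕ, Γ l₁ * Γ l₂ * CG0 l₁ l₂ l ^ 2) := rfl
  have hbdd : ∀ l, BddAbove (Set.range (fun l₁ =>
      (∑' l₂:ℕ, Γ l₁ * Γ l₂ * CG0 l₁ l₂ l ^ 2) /
      (∑' l₁:ℕ, ∑' l₂:ℕ, Γ l₁ * Γ l₂ * CG0 l₁ l₂ l ^ 2))) := by
    intro l
    refine ⟨(A/c₁) * (1/((l:ℝ)+1)), ?_⟩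
    rintro x ⟨l₁, rfl⟩
    exact hratio l l₁
  apply squeeze_zero (g := fun l:ℕ => (A/c₁) * (1/((l:ℝ)+1)))
  · intro l
    have h0 : (0:ℝ) ≤ (∑' l₂:ℕ, Γ 0 * Γ l₂ * CG0 0 l₂ l ^ 2) /
        (∑' l₁:ℕ, ∑' l₂:ℕ, Γ l₁ * Γ l₂ * CG0 l₁ l₂ l ^ 2) := by
      apply div_nonneg _ (hDpos l).le
      exact tsum_nonneg (fun l₂ => by have := hΓnn 0; have := hΓnn l₂; positivity)
    exact le_trans h0 (le_ciSup (hbdd l) 0)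
  · intro l
    exact ciSup_le (hratio l)
  · have h := tendsto_one_div_add_atTop_nhds_zero_nat.const_mul (A/c₁)
    simpa using h

end
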